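/- Let $G:[0,R)\to(0,\infty)$ be increasing and differentiable, extending continuously to $R$ with $G(R)<\infty$, with $G'(r)\to\infty$ as $r\to R^-$. Suppose $\frac{1}{G'(r)} \sim -C\,(G(R)-G(r))\log(G(R)-G(r))$ as $r\to R^-$ for some $C>0$. Then $G'(r) \sim C''\,\big(-(R-r)\log(R-r)\big)^{-1/2}$ as $r\to R^-$ for some constant $C''>0$. -/

import Mathlib

open Filter Topology Asymptotics

lemma aux_ratio_one {α : Type*} {l : Filter α} {L : α → ℝ}
    (hL : Tendsto L l atTop) :
    Tendsto (fun r => (1/2 + L r) / L r) l (𝓝 1) := by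
  have h1 : Tendsto (fun r => (1/2 : ℝ) * (L r)⁻¹ + 1) l (𝓝 ((1/2) * 0 + 1)) :=
    (hL.inv_tendsto_atTop.const_mul _).add tendsto_const_nhds
  rw [show (1/2 : ℝ) * 0 + 1 = 1 by norm_num] at h1
  refine h1.congr' ?_
  filter_upwards [hL.eventually_ge_atTop 1] with r hr
  have hne : L r ≠ 0 := by linarith
  field_simp

lemma alg1 (C C2 a b La Rr Mr X : ℝ) (hRr : Rr ≠ 0) (hMr : Mr ≠ 0) (hb : b ≠ 0)
    (hC : C ≠ 0) (hX2 : X ^ 2 = (Rr * Mr)⁻¹) (hC2 : C2 ^ 2 = C⁻¹) :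
    2 * (C / 2 * (a ^ 2 * b) / Rr) * (La / Mr) * (La / b) = (C * a * La * (C2 * X)) ^ 2 := by
  rw [mul_pow (C * a * La) (C2 * X), mul_pow C2 X, hX2, hC2]
  field_simp

lemma aux_LM {α : Type*} {l : Filter α} {L M : α → ℝ} {c : ℝ}
    (hL : Tendsto L l atTop) (hM : Tendsto M l atTop)
    (h : Tendsto (fun r => 2 * L r - M r - Real.log (1/2 + L r)) l (𝓝 c)) :
    Tendsto (fun r => L r / M r) l (𝓝 (1/2)) := by
  have hL2 : Tendsto (fun r => 1/2 + L r) l atTop := tendsto_atTop_add_const_left _ _ hL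
  -- log(1/2+L)/(1/2+L) → 0
  have h1 : Tendsto (fun r => Real.log (1/2 + L r) / (1/2 + L r)) l (𝓝 0) := by
    have := (Real.isLittleO_log_id_atTop.comp_tendsto hL2).tendsto_div_nhds_zero
    simpa [Function.comp] using this
  -- log(1/2+L)/L → 0
  have h3 : Tendsto (fun r => Real.log (1/2 + L r) / L r) l (𝓝 0) := by
    have hm := h1.mul (aux_ratio_one hL)
    rw [show (0:ℝ) * 1 = 0 by ring] at hm
    refine hm.congr' ?_
    filter_upwards [hL.eventually_ge_atTop 1] with r hr
    have hb : (1/2 + L r) ≠ 0 := by linarith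
    rw [div_mul_div_comm, mul_comm (Real.log (1/2 + L r)) (1/2 + L r),
      mul_div_mul_left _ _ hb]
  -- M/L → 2
  have h4 : Tendsto (fun r => M r / L r) l (𝓝 2) := by
    have he : Tendsto (fun r => (2 * L r - M r - Real.log (1/2 + L r)) / L r) l (𝓝 0) :=
      h.div_atTop hL
    have hm : Tendsto (fun r => 2 - Real.log (1/2 + L r) / L r
        - (2 * L r - M r - Real.log (1/2 + L r)) / L r) l (𝓝 (2 - 0 - 0)) :=
      (tendsto_const_nhds.sub h3).sub he
    rw [show (2:ℝ) - 0 - 0 = 2 by ring] at hm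
    refine hm.congr' ?_
    filter_upwards [hL.eventually_ge_atTop 1] with r hr
    have hne : L r ≠ 0 := by linarith
    field_simp
    ring
  have h5 := h4.inv₀ (by norm_num)
  rw [show ((2:ℝ))⁻¹ = 1/2 by norm_num] at h5
  refine h5.congr (fun r => ?_)
  rw [inv_div]

set_option maxHeartbeats 2000000 in
/-- Integration of the asymptotic differential equation
`1/G'(r) ∼ -C (G(R)-G(r)) log(G(R)-G(r))`: then
`G'(r) ∼ C'' (-(R-r) log(r-r))^{-1/2}` as `r → R⁻` for some `C'' > 0`. -/
theorem asymptotic_integration_d6 (R C : ℝ) (G : ℝ → ℝ)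
    (hR : 0 < R) (hC : 0 < C)
    (hGpos : ∀ r ∈ Set.Icc (0 : ℝ) R, 0 < G r)
    (hGmono : StrictMonoOn G (Set.Icc 0 R))
    (hGdiff : ∀ r ∈ Set.Ico (0 : ℝ) R, DifferentiableAt ℝ G r)
    (hGcont : ContinuousWithinAt G (Set.Iic R) R)
    (hG' : Tendsto (deriv G) (𝓝[<] R) atTop)
    (hode : (fun r => 1 / deriv G r) ~[𝓝[<] R]
      fun r => -(C * (G R - G r) * Real.log (G R - G r))) :
    ∃ C'' > 0, deriv G ~[𝓝[<] R]
      fun r => C'' * (-((R - r) * Real.log (R - r))) ^ (-(1 / 2) : ℝ) := by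
  set l := 𝓝[<] R with hl
  have ev1 : ∀ᶠ r in l, r ∈ Set.Ioo 0 R :=
    eventually_of_mem (Ioo_mem_nhdsLT_of_mem ⟨hR, le_refl R⟩) (fun x hx => hx)
  have hHpos : ∀ᶠ r in l, 0 < G R - G r := by
    filter_upwards [ev1] with r hr
    have := hGmono ⟨hr.1.le, hr.2.le⟩ ⟨hR.le, le_refl R⟩ hr.2
    linarith
  have hGtends : Tendsto G l (𝓝 (G R)) :=
    hGcont.tendsto.mono_left (nhdsWithin_mono R Set.Iio_subset_Iic_self)
  have hH0' : Tendsto (fun r => G R - G r) l (𝓝 0) := by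
    have : Tendsto (fun r => G R - G r) l (𝓝 (G R - G R)) :=
      (tendsto_const_nhds (x := G R)).sub hGtends
    simpa using this
  have hH0 : Tendsto (fun r => G R - G r) l (𝓝[>] 0) :=
    tendsto_nhdsWithin_iff.mpr ⟨hH0', hHpos⟩
  have hHlt : ∀ᶠ r in l, G R - G r < 1/2 := hH0'.eventually (eventually_lt_nhds (by norm_num))
  have hL : Tendsto (fun r => -Real.log (G R - G r)) l atTop :=
    tendsto_neg_atBot_atTop.comp (Real.tendsto_log_nhdsGT_zero.comp hH0)
  have hRr : Tendsto (fun r => R - r) l (𝓝[>] 0) := by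
    refine tendsto_nhdsWithin_iff.mpr ⟨?_, ?_⟩
    · have : Tendsto (fun r : ℝ => r) l (𝓝 R) := tendsto_id.mono_left nhdsWithin_le_nhds
      have h2 : Tendsto (fun r : ℝ => R - r) l (𝓝 (R - R)) :=
        (tendsto_const_nhds (x := R)).sub this
      simpa using h2
    · filter_upwards [self_mem_nhdsWithin] with r (hr : r < R)
      simpa using hr
  have hRrpos : ∀ᶠ r in l, 0 < R - r := (tendsto_nhdsWithin_iff.mp hRr).2
  have hRrlt : ∀ᶠ r in l, R - r < 1 :=
    (tendsto_nhdsWithin_iff.mp hRr).1.eventually (eventually_lt_nhds (by norm_num))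
  have hM : Tendsto (fun r => -Real.log (R - r)) l atTop :=
    tendsto_neg_atBot_atTop.comp (Real.tendsto_log_nhdsGT_zero.comp hRr)
  have hG'pos : ∀ᶠ r in l, 1 ≤ deriv G r := hG'.eventually_ge_atTop 1
  -- step (A): deriv G * (C * H * L) → 1
  have hz : ∀ᶠ r in l, -(C * (G R - G r) * Real.log (G R - G r)) ≠ 0 := by
    filter_upwards [hHpos, hHlt] with r h1 h2
    have hlogneg : Real.log (G R - G r) < 0 := Real.log_neg h1 (by linarith)
    have hm := mul_pos hC h1
    have : 0 < -(C * (G R - G r) * Real.log (G R - G r)) := by nlinarith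
    exact ne_of_gt this
  have hT : Tendsto (fun r => (1 / deriv G r) /
      (-(C * (G R - G r) * Real.log (G R - G r)))) l (𝓝 1) := by
    have := (Asymptotics.isEquivalent_iff_tendsto_one hz).mp hode
    exact this
  have hT2 : Tendsto (fun r => deriv G r *
      (C * (G R - G r) * (-Real.log (G R - G r)))) l (𝓝 1) := by
    have hinv := hT.inv₀ one_ne_zero
    rw [inv_one] at hinv
    refine hinv.congr' ?_
    filter_upwards [] with r
    rw [one_div, inv_div, div_eq_mul_inv, inv_inv]
    ring
  -- L'Hopital setup
  set f : ℝ → ℝ := fun r => -((C/2) * ((G R - G r)^2 * (Real.log (G R - G r) - 1/2))) with hf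
  set f' : ℝ → ℝ := fun r => C * (G R - G r) * Real.log (G R - G r) * deriv G r with hf'
  have hff' : ∀ᶠ r in l, HasDerivAt f (f' r) r := by
    filter_upwards [ev1, hHpos] with r hr hpos
    have hne : G R - G r ≠ 0 := ne_of_gt hpos
    have hG_r : HasDerivAt G (deriv G r) r := (hGdiff r ⟨hr.1.le, hr.2⟩).hasDerivAt
    have hH_r : HasDerivAt (fun x => G R - G x) (-(deriv G r)) r := by
      have := (hasDerivAt_const r (G R)).sub hG_r
      rwa [zero_sub] at this
    have h1 : HasDerivAt (fun u : ℝ => u^2) (2 * (G R - G r)) (G R - G r) := by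
      simpa using hasDerivAt_pow 2 (G R - G r)
    have h2 : HasDerivAt (fun u : ℝ => Real.log u - 1/2) ((G R - G r)⁻¹) (G R - G r) :=
      (Real.hasDerivAt_log hne).sub_const _
    have hΦ : HasDerivAt (fun u : ℝ => (C/2) * (u^2 * (Real.log u - 1/2)))
        (C * (G R - G r) * Real.log (G R - G r)) (G R - G r) := by
      have := ((h1.mul h2).const_mul (C/2))
      refine this.congr_deriv ?_
      rw [pow_two, mul_inv_cancel_right₀ hne]
      ring
    have hcomp := (hΦ.comp r hH_r).neg
    refine hcomp.congr_deriv ?_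
    simp only [hf']
    ring
  have hgg' : ∀ᶠ r in l, HasDerivAt (fun r : ℝ => R - r) (-1 : ℝ) r := by
    filter_upwards [] with r
    have := (hasDerivAt_const r R).sub (hasDerivAt_id r)
    rwa [zero_sub] at this
  have hfa : Tendsto f l (𝓝 0) := by
    have t1 : Tendsto (fun u : ℝ => Real.log u * u ^ (2:ℝ)) (𝓝[>] 0) (𝓝 0) :=
      tendsto_log_mul_rpow_nhdsGT_zero two_pos
    have t1' : Tendsto (fun u : ℝ => Real.log u * u ^ 2) (𝓝[>] 0) (𝓝 0) := by
      refine t1.congr' ?_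
      filter_upwards [self_mem_nhdsWithin] with u (hu : 0 < u)
      rw [show (2:ℝ) = ((2:ℕ):ℝ) by norm_num, Real.rpow_natCast]
    have t2 : Tendsto (fun u : ℝ => u ^ 2) (𝓝[>] 0) (𝓝 0) := by
      have := ((continuous_pow 2).tendsto (0:ℝ)).mono_left (nhdsWithin_le_nhds (s := Set.Ioi 0))
      simpa using this
    have tΦ : Tendsto (fun u : ℝ => -((C/2) * (u^2 * (Real.log u - 1/2)))) (𝓝[>] 0) (𝓝 0) := by
      have hcomb : Tendsto (fun u : ℝ => -((C/2) * (Real.log u * u^2) - (C/4) * u^2))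
          (𝓝[>] 0) (𝓝 (-((C/2) * 0 - (C/4) * 0))) :=
        ((t1'.const_mul (C/2)).sub (t2.const_mul (C/4))).neg
      rw [show -((C/2) * 0 - (C/4) * (0:ℝ)) = 0 by ring] at hcomb
      refine hcomb.congr (fun u => ?_)
      ring
    exact tΦ.comp hH0
  have hga : Tendsto (fun r : ℝ => R - r) l (𝓝 0) := (tendsto_nhdsWithin_iff.mp hRr).1
  have hdiv : Tendsto (fun r => f' r / (-1 : ℝ)) l (𝓝 1) := by
    refine hT2.congr (fun r => ?_)
    simp only [hf']
    ring
  have hP : Tendsto (fun r => f r / (R - r)) l (𝓝 1) :=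
    HasDerivAt.lhopital_zero_nhdsLT hff' hgg'
      (by filter_upwards [] with r; norm_num) hfa hga hdiv
  -- take logs
  have hD : Tendsto (fun r => Real.log (f r / (R - r))) l (𝓝 0) := by
    have := (Real.continuousAt_log one_ne_zero).tendsto.comp hP
    simpa using! this
  have hE : Tendsto (fun r => 2 * (-Real.log (G R - G r)) - (-Real.log (R - r))
      - Real.log (1/2 + (-Real.log (G R - G r)))) l (𝓝 (Real.log (C/2))) := by
    have hm : Tendsto (fun r => Real.log (C/2) - Real.log (f r / (R - r))) l
        (𝓝 (Real.log (C/2) - 0)) := tendsto_const_nhds.sub hD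
    rw [sub_zero] at hm
    refine hm.congr' ?_
    filter_upwards [hHpos, hHlt, hRrpos] with r h1 h2 h3
    have hlogneg : Real.log (G R - G r) < 0 := Real.log_neg h1 (by linarith)
    have ha2 : (G R - G r)^2 ≠ 0 := pow_ne_zero _ (ne_of_gt h1)
    have hb : (1/2 + (-Real.log (G R - G r))) ≠ 0 := by
      have : (0:ℝ) < 1/2 + (-Real.log (G R - G r)) := by linarith
      exact ne_of_gt this
    have hcne : (C/2 : ℝ) ≠ 0 := by positivity
    have hfr : f r = (C/2) * ((G R - G r)^2 * (1/2 + (-Real.log (G R - G r)))) := by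
      simp only [hf]; ring
    rw [hfr, Real.log_div (mul_ne_zero hcne (mul_ne_zero ha2 hb)) (ne_of_gt h3),
        Real.log_mul hcne (mul_ne_zero ha2 hb), Real.log_mul ha2 hb, Real.log_pow]
    push_cast
    ring
  have hhalf : Tendsto (fun r => (-Real.log (G R - G r)) / (-Real.log (R - r))) l
      (𝓝 (1/2)) := aux_LM hL hM hE
  have hLfrac : Tendsto (fun r => (-Real.log (G R - G r)) /
      (1/2 + (-Real.log (G R - G r)))) l (𝓝 1) := by
    have := (aux_ratio_one hL).inv₀ one_ne_zero
    rw [inv_one] at this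
    refine this.congr (fun r => ?_)
    rw [inv_div]
  -- final assembly
  set C'' : ℝ := C ^ (-(1/2) : ℝ) with hC''
  have hC''pos : 0 < C'' := Real.rpow_pos_of_pos hC _
  have hXpos : ∀ᶠ r in l, 0 < (-((R - r) * Real.log (R - r))) ^ (-(1/2) : ℝ) := by
    filter_upwards [hRrpos, hRrlt] with r h1 h2
    have hlog : Real.log (R - r) < 0 := Real.log_neg h1 h2
    have hb : 0 < -((R - r) * Real.log (R - r)) := by nlinarith
    exact Real.rpow_pos_of_pos hb _
  have hS2 : Tendsto (fun r => ((C * (G R - G r) * (-Real.log (G R - G r))) *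
      (C'' * (-((R - r) * Real.log (R - r))) ^ (-(1/2) : ℝ)))^2) l (𝓝 1) := by
    have hrhs : Tendsto (fun r => 2 * (f r / (R - r)) *
        ((-Real.log (G R - G r)) / (-Real.log (R - r))) *
        ((-Real.log (G R - G r)) / (1/2 + (-Real.log (G R - G r))))) l
        (𝓝 (2 * 1 * (1/2) * 1)) := ((hP.const_mul 2).mul hhalf).mul hLfrac
    rw [show (2:ℝ) * 1 * (1/2) * 1 = 1 by norm_num] at hrhs
    refine hrhs.congr' ?_
    filter_upwards [hHpos, hHlt, hRrpos, hRrlt] with r h1 h2 h3 h4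
    have hlogneg : Real.log (G R - G r) < 0 := Real.log_neg h1 (by linarith)
    have hlogRr : Real.log (R - r) < 0 := Real.log_neg h3 h4
    have hLpos : 0 < -Real.log (G R - G r) := by linarith
    have hMpos : 0 < -Real.log (R - r) := by linarith
    have hbpos : (0:ℝ) < 1/2 + (-Real.log (G R - G r)) := by linarith
    have hX2 : ((-((R - r) * Real.log (R - r))) ^ (-(1/2) : ℝ))^2
        = ((R - r) * (-Real.log (R - r)))⁻¹ := by
      have heq : -((R - r) * Real.log (R - r)) = (R - r) * (-Real.log (R - r)) := by ring
      have hbp : (0:ℝ) < (R - r) * (-Real.log (R - r)) := mul_pos h3 hMpos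
      rw [heq, ← Real.rpow_natCast (((R - r) * (-Real.log (R - r))) ^ (-(1/2):ℝ)) 2,
        ← Real.rpow_mul hbp.le]
      rw [show (-(1/2):ℝ) * ((2:ℕ):ℝ) = -1 by norm_num, Real.rpow_neg_one]
    have hCC : C''^2 = C⁻¹ := by
      rw [hC'', ← Real.rpow_natCast (C ^ (-(1/2):ℝ)) 2, ← Real.rpow_mul hC.le]
      norm_num
      exact Real.rpow_neg_one C
    have hfr : f r = (C/2) * ((G R - G r)^2 * (1/2 + (-Real.log (G R - G r)))) := by
      simp only [hf]; ring
    rw [hfr]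
    exact alg1 C C'' _ _ _ _ _ _ (ne_of_gt h3) (ne_of_gt hMpos) (ne_of_gt hbpos)
      (ne_of_gt hC) hX2 hCC
  have hS : Tendsto (fun r => (C * (G R - G r) * (-Real.log (G R - G r))) *
      (C'' * (-((R - r) * Real.log (R - r))) ^ (-(1/2) : ℝ))) l (𝓝 1) := by
    have hsq : Tendsto (fun r => Real.sqrt (((C * (G R - G r) * (-Real.log (G R - G r))) *
        (C'' * (-((R - r) * Real.log (R - r))) ^ (-(1/2) : ℝ)))^2)) l (𝓝 (Real.sqrt 1)) :=
      (Real.continuous_sqrt.tendsto 1).comp hS2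
    rw [Real.sqrt_one] at hsq
    refine hsq.congr' ?_
    filter_upwards [hHpos, hHlt, hXpos] with r h1 h2 h3
    have hlogneg : Real.log (G R - G r) < 0 := Real.log_neg h1 (by linarith)
    have hLpos : 0 < -Real.log (G R - G r) := by linarith
    have hpos : 0 < (C * (G R - G r) * (-Real.log (G R - G r))) *
        (C'' * (-((R - r) * Real.log (R - r))) ^ (-(1/2) : ℝ)) :=
      mul_pos (mul_pos (mul_pos hC h1) hLpos) (mul_pos hC''pos h3)
    rw [Real.sqrt_sq hpos.le]
  refine ⟨C'', hC''pos, ?_⟩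
  have hzX : ∀ᶠ r in l, C'' * (-((R - r) * Real.log (R - r))) ^ (-(1/2) : ℝ) ≠ 0 := by
    filter_upwards [hXpos] with r h1
    exact ne_of_gt (mul_pos hC''pos h1)
  rw [Asymptotics.isEquivalent_iff_tendsto_one hzX]
  have hW : Tendsto (fun r => deriv G r /
      (C'' * (-((R - r) * Real.log (R - r))) ^ (-(1/2) : ℝ))) l (𝓝 1) := by
    have hq := hT2.div hS one_ne_zero
    rw [show 𝓝 ((1:ℝ) / 1) = 𝓝 1 by norm_num] at hq
    refine hq.congr' ?_
    filter_upwards [hHpos, hHlt] with r h1 h2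
    simp only [Pi.div_apply]
    have hlogneg : Real.log (G R - G r) < 0 := Real.log_neg h1 (by linarith)
    have hLpos : 0 < -Real.log (G R - G r) := by linarith
    have hane : C * (G R - G r) * (-Real.log (G R - G r)) ≠ 0 :=
      ne_of_gt (mul_pos (mul_pos hC h1) hLpos)
    rw [mul_comm (deriv G r) _, mul_div_mul_left _ _ hane]
  exact hW
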